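/- Park induction correctness message 'assuming the invariant is not necessary': let S = Park(b, C, I) be the encoding assert(I); havoc(v⃗); validate; assume(I); if(b){ C; assert(I); assume([false]) } else {}, and let S′ be obtained from S by removing the statement assume(I). If X ≤ vp[S′](Y) pointwise, then X ≤ vp[Park(b, C, ∞)](Y) pointwise, where Park(b, C, ∞) replaces every occurrence of I in the encoding by the constant-∞ expectation. -/

import Mathlib

open scoped ENNReal

/-- HeyVL statements over variables `Var` and values `Val`.
Program states are functions `Var → Val`, expectations are `(Var → Val) → ℝ≥0∞`. -/
inductive Stmt (Var Val : Type) where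
  /-- effectless statement (used for erased statements) -/
  | skip
  /-- probabilistic assignment `x ≈ μ` for a finite-support distribution
  `μ = p₁·t₁ + … + pₙ·tₙ` given as a list of pairs of probabilities and
  value expressions -/
  | passign (x : Var) (μ : List (ℝ≥0∞ × ((Var → Val) → Val)))
  | assert (Y : (Var → Val) → ℝ≥0∞)
  | assume_ (Y : (Var → Val) → ℝ≥0∞)
  | coassert (Y : (Var → Val) → ℝ≥0∞)
  | coassume (Y : (Var → Val) → ℝ≥0∞)
  | havoc (x : Var)
  | cohavoc (x : Var)
  | validate
  | covalidate
  | reward (a : (Var → Val) → ℝ≥0∞)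
  | seq (S₁ S₂ : Stmt Var Val)
  | demonic (S₁ S₂ : Stmt Var Val)
  | angelic (S₁ S₂ : Stmt Var Val)

variable {Var Val : Type} [DecidableEq Var]

/-- The verification pre-expectation transformer `vp[S]`. -/
noncomputable def vp : Stmt Var Val → ((Var → Val) → ℝ≥0∞) → ((Var → Val) → ℝ≥0∞)
  | .skip, X => X
  | .passign x μ, X =>
      fun σ => (μ.map (fun pt => pt.1 * X (Function.update σ x (pt.2 σ)))).sum
  | .assert Y, X => fun σ => Y σ ⊓ X σ
  | .assume_ Y, X => fun σ => if Y σ ≤ X σ then ⊤ else X σ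
  | .coassert Y, X => fun σ => Y σ ⊔ X σ
  | .coassume Y, X => fun σ => if X σ ≤ Y σ then 0 else X σ
  | .havoc x, X => fun σ => ⨅ v : Val, X (Function.update σ x v)
  | .cohavoc x, X => fun σ => ⨆ v : Val, X (Function.update σ x v)
  | .validate, X => fun σ => if X σ = ⊤ then ⊤ else 0
  | .covalidate, X => fun σ => if X σ = 0 then 0 else ⊤
  | .reward a, X => fun σ => X σ + a σ
  | .seq S₁ S₂, X => vp S₁ (vp S₂ X)
  | .demonic S₁ S₂, X => fun σ => vp S₁ X σ ⊓ vp S₂ X σ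
  | .angelic S₁ S₂, X => fun σ => vp S₁ X σ ⊔ vp S₂ X σ

/-- The Boolean embedding `[b]`: `∞` where `b` holds, `0` elsewhere. -/
noncomputable def emb (b : (Var → Val) → Bool) : (Var → Val) → ℝ≥0∞ :=
  fun σ => if b σ then ⊤ else 0

/-- The embedding `[¬b]` of the negated guard. -/
noncomputable def embNot (b : (Var → Val) → Bool) : (Var → Val) → ℝ≥0∞ :=
  fun σ => if b σ then 0 else ⊤

/-- `if(b){S₁}else{S₂}`, encoded as the demonic choice of the guarded branches. -/
noncomputable def ifStmt (b : (Var → Val) → Bool) (S₁ S₂ : Stmt Var Val) : Stmt Var Val :=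
  .demonic (.seq (.assume_ (emb b)) S₁) (.seq (.assume_ (embNot b)) S₂)

/-- `havoc(v⃗); rest` for a list of variables `v⃗`. -/
noncomputable def havAll (vs : List Var) (rest : Stmt Var Val) : Stmt Var Val :=
  vs.foldr (fun x S => .seq (.havoc x) S) rest

/-- The Park induction encoding
`Park(b, C, I) = assert(I); havoc(v⃗); validate; assume(I);
if(b){ C; assert(I); assume([false]) } else {}`. -/
noncomputable def Park (b : (Var → Val) → Bool) (C : Stmt Var Val)
    (I : (Var → Val) → ℝ≥0∞) (vs : List Var) : Stmt Var Val :=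
  .seq (.assert I) (havAll vs (.seq .validate (.seq (.assume_ I)
    (ifStmt b (.seq C (.seq (.assert I) (.assume_ (fun _ => 0)))) .skip))))

/-- `Park(b, C, I)` with the statement `assume(I)` removed (replaced by `skip`). -/
noncomputable def ParkNoAssumeInv (b : (Var → Val) → Bool) (C : Stmt Var Val)
    (I : (Var → Val) → ℝ≥0∞) (vs : List Var) : Stmt Var Val :=
  .seq (.assert I) (havAll vs (.seq .validate (.seq .skip
    (ifStmt b (.seq C (.seq (.assert I) (.assume_ (fun _ => 0)))) .skip))))

lemma vp_mono (S : Stmt Var Val) {X X' : (Var → Val) → ℝ≥0∞}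
    (h : ∀ σ, X σ ≤ X' σ) : ∀ σ, vp S X σ ≤ vp S X' σ := by
  induction S generalizing X X' with
  | skip => exact h
  | passign x μ =>
      intro σ
      simp only [vp]
      exact List.sum_le_sum fun pt _ => mul_le_mul_right (h _) _
  | assert Z => intro σ; exact inf_le_inf_left _ (h σ)
  | assume_ Z =>
      intro σ; simp only [vp]
      by_cases h2 : Z σ ≤ X' σ
      · simp [h2]
      · have h1 : ¬ Z σ ≤ X σ := fun hh => h2 (hh.trans (h σ))
        simp [h1, h2, h σ]
  | coassert Z => intro σ; exact sup_le_sup_left (h σ) _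
  | coassume Z =>
      intro σ; simp only [vp]
      by_cases h1 : X σ ≤ Z σ
      · simp [h1]
      · have h2 : ¬ X' σ ≤ Z σ := fun hh => h1 ((h σ).trans hh)
        simp [h1, h2, h σ]
  | havoc x => intro σ; exact iInf_mono fun v => h _
  | cohavoc x => intro σ; exact iSup_mono fun v => h _
  | validate =>
      intro σ; simp only [vp]
      by_cases h1 : X σ = ⊤
      · have : X' σ = ⊤ := top_le_iff.mp (h1 ▸ h σ)
        simp [h1, this]
      · simp [h1]
  | covalidate =>
      intro σ; simp only [vp]
      by_cases h2 : X' σ = 0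
      · have : X σ = 0 := le_zero_iff.mp (h2 ▸ h σ)
        simp [this, h2]
      · simp [h2]
  | reward a => intro σ; exact add_le_add_left (h σ) _
  | seq S₁ S₂ ih₁ ih₂ => exact ih₁ (ih₂ h)
  | demonic S₁ S₂ ih₁ ih₂ => intro σ; exact inf_le_inf (ih₁ h σ) (ih₂ h σ)
  | angelic S₁ S₂ ih₁ ih₂ => intro σ; exact sup_le_sup (ih₁ h σ) (ih₂ h σ)

lemma assume_top (W : (Var → Val) → ℝ≥0∞) :
    vp (Stmt.assume_ (fun _ => (⊤ : ℝ≥0∞))) W = W := by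
  funext σ
  simp only [vp]
  by_cases h : (⊤ : ℝ≥0∞) ≤ W σ
  · simp [h, top_le_iff.mp h]
  · simp [h]

/-- A "pointwise vp domination" relation between statements. -/
def VpLe (S₁ S₂ : Stmt Var Val) : Prop :=
  ∀ W W' : (Var → Val) → ℝ≥0∞, (∀ σ, W σ ≤ W' σ) → ∀ σ, vp S₁ W σ ≤ vp S₂ W' σ

lemma havAll_vpLe (vs : List Var) {r₁ r₂ : Stmt Var Val} (h : VpLe r₁ r₂) :
    VpLe (havAll vs r₁) (havAll vs r₂) := by
  induction vs with
  | nil => exact h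
  | cons x xs ih =>
      intro W W' hW σ
      exact iInf_mono fun v => ih W W' hW _

/-- "Assuming the invariant is not necessary": if the Park encoding with `assume(I)`
removed verifies w.r.t. `(X, Y)`, then the Park encoding with invariant `∞` verifies
w.r.t. `(X, Y)`. -/
theorem park_assume_invariant_unnecessary (b : (Var → Val) → Bool) (C : Stmt Var Val)
    (I X Y : (Var → Val) → ℝ≥0∞) (vs : List Var)
    (h : ∀ σ, X σ ≤ vp (ParkNoAssumeInv b C I vs) Y σ) :
    ∀ σ, X σ ≤ vp (Park b C (fun _ => ⊤) vs) Y σ := by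
  intro σ
  refine (h σ).trans ?_
  set body₁ : Stmt Var Val := .seq C (.seq (.assert I) (.assume_ (fun _ => 0))) with hb₁
  set body₂ : Stmt Var Val :=
    .seq C (.seq (.assert (fun _ => (⊤ : ℝ≥0∞))) (.assume_ (fun _ => 0))) with hb₂
  have hbody : VpLe body₁ body₂ := by
    intro W W' hW τ
    show vp C (vp (Stmt.assert I) (vp (Stmt.assume_ (fun _ => 0)) W)) τ ≤
      vp C (vp (Stmt.assert (fun _ => (⊤ : ℝ≥0∞))) (vp (Stmt.assume_ (fun _ => 0)) W')) τ
    apply vp_mono C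
    intro ρ
    show I ρ ⊓ vp (Stmt.assume_ (fun _ => 0)) W ρ ≤ ⊤ ⊓ vp (Stmt.assume_ (fun _ => 0)) W' ρ
    rw [top_inf_eq]
    exact inf_le_right.trans (vp_mono (Stmt.assume_ (fun _ => 0)) hW ρ)
  have hIF : VpLe (ifStmt b body₁ .skip) (ifStmt b body₂ .skip) := by
    intro W W' hW τ
    refine inf_le_inf ?_ ?_
    · exact vp_mono (Stmt.assume_ (emb b)) (hbody W W' hW) τ
    · exact vp_mono (Stmt.assume_ (embNot b)) hW τ
  have hmid : VpLe (Stmt.seq .validate (.seq .skip (ifStmt b body₁ .skip)))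
      (Stmt.seq .validate (.seq (.assume_ (fun _ => (⊤ : ℝ≥0∞))) (ifStmt b body₂ .skip))) := by
    intro W W' hW τ
    have h1 : ∀ ρ, vp (ifStmt b body₁ .skip) W ρ ≤ vp (ifStmt b body₂ .skip) W' ρ :=
      hIF W W' hW
    calc vp (Stmt.seq .validate (.seq .skip (ifStmt b body₁ .skip))) W τ
        = vp Stmt.validate (vp (ifStmt b body₁ .skip) W) τ := rfl
      _ ≤ vp Stmt.validate (vp (ifStmt b body₂ .skip) W') τ := vp_mono Stmt.validate h1 τ
      _ = vp (Stmt.seq .validate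
            (.seq (.assume_ (fun _ => (⊤ : ℝ≥0∞))) (ifStmt b body₂ .skip))) W' τ := by
          rw [show vp (Stmt.seq .validate
              (.seq (.assume_ (fun _ => (⊤ : ℝ≥0∞))) (ifStmt b body₂ .skip))) W'
            = vp Stmt.validate
              (vp (Stmt.assume_ (fun _ => (⊤ : ℝ≥0∞))) (vp (ifStmt b body₂ .skip) W'))
            from rfl, assume_top]
  have hhav := havAll_vpLe vs hmid Y Y (fun _ => le_rfl) σ
  show I σ ⊓ _ ≤ (fun _ => (⊤ : ℝ≥0∞)) σ ⊓ _
  rw [show (fun _ => (⊤ : ℝ≥0∞)) σ = ⊤ from rfl, top_inf_eq]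
  exact inf_le_right.trans hhav
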